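/- arXiv:1310.1896 — 5 statements merged into one kernel-verified Lean document; each statement's English description precedes it below -/
import Mathlib

section
/- Let G be a 2-connected cubic simple graph and let γ be a 6-cycle of G that has at least one chord, such that exactly four edges e_1, e_2, e_3, e_4 of G join V(γ) to V ∖ V(γ), with pairwise distinct endpoints w_1, w_2, w_3, w_4 outside V(γ), indexed in the cyclic order induced by γ. Then in the graph obtained from G by deleting all edges of the induced subgraph G[V(γ)], there is a path joining {w_1, w_2} to {w_3, w_4}, or there is a path joining {w_2, w_3} to {w_1, w_4}. -/
open SimpleGraph

/-- Lemma for Reduction 4: for a chorded 6-cycle `γ` of a 2-connected cubic graph `G`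
attached to the rest of the graph by four edges with pairwise distinct outside endpoints
`w₁, w₂, w₃, w₄` (indexed in the cyclic order induced by `γ`), in the graph obtained from
`G` by deleting all edges of `G[V(γ)]` there is a path joining `{w₁, w₂}` to `{w₃, w₄}`
or a path joining `{w₂, w₃}` to `{w₁, w₄}`. -/
theorem stmt7 {V : Type*} [Fintype V] [DecidableEq V]
    (G : SimpleGraph V) [DecidableRel G.Adj]
    (hcubic : ∀ v : V, G.degree v = 3)
    (hcard3 : 3 ≤ Fintype.card V)
    (hconn : G.Connected)
    (hdel : ∀ v : V, (G.induce ({v}ᶜ : Set V)).Connected)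
    (a : V) (c : G.Walk a a) (hcyc : c.IsCycle) (hlen : c.length = 6)
    (hchord : ∃ x y : V, x ∈ c.support ∧ y ∈ c.support ∧ G.Adj x y ∧ s(x, y) ∉ c.edges)
    (w : Fin 4 → V) (hwinj : Function.Injective w)
    (hwout : ∀ i, w i ∉ c.support)
    (k : Fin 4 → ℕ) (hk : StrictMono k) (hk6 : k 3 < 6)
    (hadj : ∀ i, G.Adj (c.getVert (k i)) (w i))
    (hcut : {e : Sym2 V | e ∈ G.edgeSet ∧ ∃ x y : V, e = s(x, y) ∧ x ∈ c.support ∧ y ∉ c.support}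
      = {s(c.getVert (k 0), w 0), s(c.getVert (k 1), w 1),
         s(c.getVert (k 2), w 2), s(c.getVert (k 3), w 3)}) :
    (∃ x ∈ ({w 0, w 1} : Set V), ∃ y ∈ ({w 2, w 3} : Set V),
      (G.deleteEdges {e : Sym2 V | ∀ z ∈ e, z ∈ c.support}).Reachable x y) ∨
    (∃ x ∈ ({w 1, w 2} : Set V), ∃ y ∈ ({w 0, w 3} : Set V),
      (G.deleteEdges {e : Sym2 V | ∀ z ∈ e, z ∈ c.support}).Reachable x y) := by
  classical
  set S : Set (Sym2 V) := {e : Sym2 V | ∀ z ∈ e, z ∈ c.support} with hS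
  set G' := G.deleteEdges S with hG'
  set u0 : V := c.getVert (k 0) with hu0
  have hklt : ∀ i : Fin 4, k i ≤ k 3 := fun i => hk.monotone (by omega)
  have hmem : ∀ i : Fin 4, c.getVert (k i) ∈ c.support := by
    intro i
    rw [SimpleGraph.Walk.mem_support_iff_exists_getVert]
    exact ⟨k i, rfl, by have := hklt i; omega⟩
  have hw0 : (w 0) ∈ ({u0}ᶜ : Set V) := by
    simp only [Set.mem_compl_iff, Set.mem_singleton_iff]
    intro h; exact hwout 0 (h ▸ hmem 0)
  have hw1 : (w 1) ∈ ({u0}ᶜ : Set V) := by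
    simp only [Set.mem_compl_iff, Set.mem_singleton_iff]
    intro h; exact hwout 1 (h ▸ hmem 0)
  obtain ⟨q⟩ := (hdel u0).preconnected ⟨w 0, hw0⟩ ⟨w 1, hw1⟩
  -- key induction
  have key : ∀ {x y : ({u0}ᶜ : Set V)} (_ : (G.induce ({u0}ᶜ : Set V)).Walk x y),
      (x : V) ∉ c.support →
      ((y : V) ∉ c.support ∧ G'.Reachable (x : V) (y : V)) ∨
      ∃ i : Fin 4, i ≠ 0 ∧ G'.Reachable (x : V) (w i) := by
    intro x y q
    induction q with
    | nil => intro hx; exact Or.inl ⟨hx, SimpleGraph.Reachable.refl _⟩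
    | @cons x x' y h q ih =>
      intro hx
      have hGadj : G.Adj (x : V) (x' : V) := h
      by_cases hx' : (x' : V) ∈ c.support
      · -- crossing edge
        right
        have hes : s((x' : V), (x : V)) ∈
            {e : Sym2 V | e ∈ G.edgeSet ∧ ∃ a b : V, e = s(a, b) ∧ a ∈ c.support ∧ b ∉ c.support} :=
          ⟨hGadj.symm, (x' : V), (x : V), rfl, hx', hx⟩
        rw [hcut] at hes
        have : ∃ i : Fin 4, s((x' : V), (x : V)) = s(c.getVert (k i), w i) := by
          simp only [Set.mem_insert_iff, Set.mem_singleton_iff] at hes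
          rcases hes with h | h | h | h
          exacts [⟨0, h⟩, ⟨1, h⟩, ⟨2, h⟩, ⟨3, h⟩]
        obtain ⟨i, hi⟩ := this
        rw [Sym2.eq_iff] at hi
        rcases hi with ⟨h1, h2⟩ | ⟨h1, h2⟩
        · refine ⟨i, ?_, by rw [h2]⟩
          intro h0
          subst h0
          exact x'.2 (Set.mem_singleton_iff.mpr h1)
        · exact absurd (h2 ▸ hmem i) hx
      · -- edge stays outside or enters outside: x' outside
        have hG'adj : G'.Adj (x : V) (x' : V) := by
          rw [hG', SimpleGraph.deleteEdges_adj]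
          refine ⟨hGadj, ?_⟩
          intro hmemS
          exact hx (hmemS (x : V) (Sym2.mem_mk_left _ _))
        rcases ih hx' with ⟨hy, hr⟩ | ⟨i, hi, hr⟩
        · exact Or.inl ⟨hy, hG'adj.reachable.trans hr⟩
        · exact Or.inr ⟨i, hi, hG'adj.reachable.trans hr⟩
  rcases key q (hwout 0) with ⟨_, hr⟩ | ⟨i, hi, hr⟩
  · right; exact ⟨w 1, Or.inl rfl, w 0, Or.inl rfl, hr.symm⟩
  · have : i = 1 ∨ i = 2 ∨ i = 3 := by omega
    rcases this with rfl | rfl | rfl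
    · right; exact ⟨w 1, Or.inl rfl, w 0, Or.inl rfl, hr.symm⟩
    · left; exact ⟨w 0, Or.inl rfl, w 2, Or.inl rfl, hr⟩
    · left; exact ⟨w 0, Or.inl rfl, w 3, Or.inr rfl, hr⟩
end

section
/- Let δ be a real number with 0 < δ ≤ 1 and set β = 1/9 − δ. Let x_1, x_2, x_3 and y_1, y_2, y_3, y_4, y_5, y_6 be nonnegative real numbers satisfying |y_1 − y_4| ≤ δ, |y_2 − y_5| ≤ δ, |y_3 − y_6| ≤ δ, and the six inequalities x_1 + y_1 + y_6 ≥ 1/3 − δ, x_2 + y_2 + y_1 ≥ 1/3 − δ, x_3 + y_3 + y_2 ≥ 1/3 − δ, x_1 + y_4 + y_3 ≥ 1/3 − δ, x_2 + y_5 + y_4 ≥ 1/3 − δ, x_3 + y_6 + y_5 ≥ 1/3 − δ. Then at least one of the following seven cases holds: (1) x_1, x_2, x_3 ≥ β; (2) x_1, y_2, y_5 ≥ β; (3) x_2, y_3, y_6 ≥ β; (4) x_3, y_1, y_4 ≥ β; (5) y_1, y_4, y_2, y_5 ≥ β; (6) y_2, y_5, y_3, y_6 ≥ β; (7) y_1,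 y_4, y_3, y_6 ≥ β. -/
/-- Technical arithmetic lemma (Lemma on cases for β) from the paper. -/
theorem stmt8 (δ : ℝ) (hδ0 : 0 < δ) (hδ1 : δ ≤ 1) (β : ℝ) (hβ : β = 1 / 9 - δ)
    (x₁ x₂ x₃ y₁ y₂ y₃ y₄ y₅ y₆ : ℝ)
    (hx₁ : 0 ≤ x₁) (hx₂ : 0 ≤ x₂) (hx₃ : 0 ≤ x₃)
    (hy₁ : 0 ≤ y₁) (hy₂ : 0 ≤ y₂) (hy₃ : 0 ≤ y₃)
    (hy₄ : 0 ≤ y₄) (hy₅ : 0 ≤ y₅) (hy₆ : 0 ≤ y₆)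
    (h14 : |y₁ - y₄| ≤ δ) (h25 : |y₂ - y₅| ≤ δ) (h36 : |y₃ - y₆| ≤ δ)
    (e1 : x₁ + y₁ + y₆ ≥ 1 / 3 - δ)
    (e2 : x₂ + y₂ + y₁ ≥ 1 / 3 - δ)
    (e3 : x₃ + y₃ + y₂ ≥ 1 / 3 - δ)
    (e4 : x₁ + y₄ + y₃ ≥ 1 / 3 - δ)
    (e5 : x₂ + y₅ + y₄ ≥ 1 / 3 - δ)
    (e6 : x₃ + y₆ + y₅ ≥ 1 / 3 - δ) :
    (β ≤ x₁ ∧ β ≤ x₂ ∧ β ≤ x₃) ∨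
    (β ≤ x₁ ∧ β ≤ y₂ ∧ β ≤ y₅) ∨
    (β ≤ x₂ ∧ β ≤ y₃ ∧ β ≤ y₆) ∨
    (β ≤ x₃ ∧ β ≤ y₁ ∧ β ≤ y₄) ∨
    (β ≤ y₁ ∧ β ≤ y₄ ∧ β ≤ y₂ ∧ β ≤ y₅) ∨
    (β ≤ y₂ ∧ β ≤ y₅ ∧ β ≤ y₃ ∧ β ≤ y₆) ∨
    (β ≤ y₁ ∧ β ≤ y₄ ∧ β ≤ y₃ ∧ β ≤ y₆) := by
  rw [abs_le] at h14 h25 h36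
  have key : ∀ a b : ℝ, ¬(β ≤ a ∧ β ≤ b) → a - b ≤ δ → b - a ≤ δ →
      a < β + δ ∧ b < β + δ := by
    intro a b h hab hba
    rcases not_and_or.mp h with h | h <;> push_neg at h <;> constructor <;> linarith
  by_cases P1 : β ≤ y₁ ∧ β ≤ y₄
  · by_cases P2 : β ≤ y₂ ∧ β ≤ y₅
    · exact Or.inr (Or.inr (Or.inr (Or.inr (Or.inl ⟨P1.1, P1.2, P2.1, P2.2⟩))))
    · obtain ⟨s2, s5⟩ := key _ _ P2 h25.2 (by linarith [h25.1])
      by_cases P3 : β ≤ y₃ ∧ β ≤ y₆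
      · exact Or.inr (Or.inr (Or.inr (Or.inr (Or.inr (Or.inr ⟨P1.1, P1.2, P3.1, P3.2⟩)))))
      · obtain ⟨s3, s6⟩ := key _ _ P3 h36.2 (by linarith [h36.1])
        exact Or.inr (Or.inr (Or.inr (Or.inl ⟨by linarith, P1.1, P1.2⟩)))
  · obtain ⟨s1, s4⟩ := key _ _ P1 h14.2 (by linarith [h14.1])
    by_cases P2 : β ≤ y₂ ∧ β ≤ y₅
    · by_cases P3 : β ≤ y₃ ∧ β ≤ y₆
      · exact Or.inr (Or.inr (Or.inr (Or.inr (Or.inr (Or.inl ⟨P2.1, P2.2, P3.1, P3.2⟩)))))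
      · obtain ⟨s3, s6⟩ := key _ _ P3 h36.2 (by linarith [h36.1])
        exact Or.inr (Or.inl ⟨by linarith, P2.1, P2.2⟩)
    · obtain ⟨s2, s5⟩ := key _ _ P2 h25.2 (by linarith [h25.1])
      by_cases P3 : β ≤ y₃ ∧ β ≤ y₆
      · exact Or.inr (Or.inr (Or.inl ⟨by linarith, P3.1, P3.2⟩))
      · obtain ⟨s3, s6⟩ := key _ _ P3 h36.2 (by linarith [h36.1])
        exact Or.inl ⟨by linarith, by linarith, by linarith⟩
end

section
/- Let G be a simple graph in which no 6-cycle has a chord, and let γ be an induced 4-cycle of G. Then no 4-cycle of G distinct from γ shares exactly one edge with γ. -/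
open SimpleGraph

private lemma walk4 {V : Type*} {G : SimpleGraph V} {a : V} (w : G.Walk a a)
    (h : w.length = 4) :
    ∃ (p q r : V) (h1 : G.Adj a p) (h2 : G.Adj p q) (h3 : G.Adj q r) (h4 : G.Adj r a),
      w = .cons h1 (.cons h2 (.cons h3 (.cons h4 .nil))) := by
  cases w with
  | nil => simp at h
  | cons h1 w =>
    cases w with
    | nil => simp at h
    | cons h2 w =>
      cases w with
      | nil => simp at h
      | cons h3 w =>
        cases w with
        | nil => simp at h
        | cons h4 w =>
          cases w with
          | nil => exact ⟨_, _, _, h1, h2, h3, h4, rfl⟩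
          | cons h5 w => simp at h

private lemma key' {V : Type*} [DecidableEq V] {G : SimpleGraph V}
    (h6 : ∀ (a : V) (c : G.Walk a a), c.IsCycle → c.length = 6 →
      ∀ x y : V, x ∈ c.support → y ∈ c.support → G.Adj x y → s(x, y) ∈ c.edges)
    {x y m n u v : V}
    (axy : G.Adj x y) (aym : G.Adj y m) (amn : G.Adj m n) (anx : G.Adj n x)
    (ayu : G.Adj y u) (auv : G.Adj u v) (avx : G.Adj v x)
    (hxm : x ≠ m) (hxn : x ≠ n) (hym : y ≠ m) (hyn : y ≠ n) (hmn : m ≠ n)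
    (hxu : x ≠ u) (hxv : x ≠ v) (hyu : y ≠ u) (hyv : y ≠ v) (huv : u ≠ v)
    (ixm : ¬ G.Adj x m) (iyn : ¬ G.Adj y n)
    (hsh : ∀ f ∈ [s(y,u), s(u,v), s(v,x)], f ∉ [s(x,y), s(y,m), s(m,n), s(n,x)]) :
    False := by
  have hxy : x ≠ y := axy.ne
  have hum : u ≠ m := by
    rintro rfl
    exact hsh s(y,u) (by simp) (by simp)
  have hun : u ≠ n := by rintro rfl; exact iyn ayu
  have hvm : v ≠ m := by rintro rfl; exact ixm avx.symm
  have hvn : v ≠ n := by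
    rintro rfl
    exact hsh s(v,x) (by simp) (by simp [Sym2.eq_swap])
  have s1 := hxy.symm; have s2 := hxm.symm; have s3 := hxn.symm; have s4 := hym.symm
  have s5 := hyn.symm; have s6 := hmn.symm; have s7 := hxu.symm; have s8 := hxv.symm
  have s9 := hyu.symm; have s10 := hyv.symm; have s11 := huv.symm
  have s12 := hum.symm; have s13 := hun.symm; have s14 := hvm.symm; have s15 := hvn.symm
  set W : G.Walk x x :=
    .cons anx.symm (.cons amn.symm (.cons aym.symm (.cons ayu (.cons auv (.cons avx .nil)))))
    with hW
  have hWc : W.IsCycle := by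
    rw [Walk.isCycle_def, Walk.isTrail_def]
    refine ⟨?_, by simp [hW], ?_⟩
    · simp only [hW, Walk.edges_cons, Walk.edges_nil, List.nodup_cons, List.mem_cons,
        List.not_mem_nil, or_false, List.nodup_nil, and_true, Sym2.eq, Sym2.rel_iff']
      simp [hxy, s1, hxm, s2, hxn, s3, hym, s4, hyn, s5, hmn, s6, hxu, s7, hxv, s8, hyu, s9,
        hyv, s10, huv, s11, hum, s12, hun, s13, hvm, s14, hvn, s15]
    · simp only [hW, Walk.support_cons, Walk.support_nil, List.tail_cons, List.nodup_cons,
        List.mem_cons, List.not_mem_nil, or_false, List.nodup_nil, and_true]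
      simp [hxy, s1, hxm, s2, hxn, s3, hym, s4, hyn, s5, hmn, s6, hxu, s7, hxv, s8, hyu, s9,
        hyv, s10, huv, s11, hum, s12, hun, s13, hvm, s14, hvn, s15]
  have := h6 x W hWc (by simp [hW]) x y (by simp [hW]) (by simp [hW]) axy
  simp only [hW, Walk.edges_cons, Walk.edges_nil, List.mem_cons, List.not_mem_nil, or_false,
    Sym2.eq, Sym2.rel_iff'] at this
  simp [hxy, s1, hxm, s2, hxn, s3, hym, s4, hyn, s5, hmn, s6, hxu, s7, hxv, s8, hyu, s9,
    hyv, s10, huv, s11, hum, s12, hun, s13, hvm, s14, hvn, s15] at this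

private lemma key3 {V : Type*} [DecidableEq V] {G : SimpleGraph V}
    (h6 : ∀ (a : V) (c : G.Walk a a), c.IsCycle → c.length = 6 →
      ∀ x y : V, x ∈ c.support → y ∈ c.support → G.Adj x y → s(x, y) ∈ c.edges)
    {x y m n x' y' u v : V}
    (axy : G.Adj x y) (aym : G.Adj y m) (amn : G.Adj m n) (anx : G.Adj n x)
    (hxm : x ≠ m) (hxn : x ≠ n) (hym : y ≠ m) (hyn : y ≠ n) (hmn : m ≠ n)
    (ixm : ¬ G.Adj x m) (iyn : ¬ G.Adj y n)
    (axy' : G.Adj x' y') (ayu' : G.Adj y' u) (auv' : G.Adj u v) (avx' : G.Adj v x')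
    (hxu' : x' ≠ u) (hxv' : x' ≠ v) (hyu' : y' ≠ u) (hyv' : y' ≠ v) (huv' : u ≠ v)
    (he : s(x, y) = s(x', y'))
    (huniq : ∀ f, f ∈ [s(y',u), s(u,v), s(v,x')] →
      f ∈ [s(x,y), s(y,m), s(m,n), s(n,x)] → f = s(x', y')) :
    False := by
  have hxy' : x' ≠ y' := axy'.ne
  have t7 := hxu'.symm; have t8 := hxv'.symm; have t9 := hyu'.symm; have t10 := hyv'.symm
  have t11 := huv'.symm; have t1 := hxy'.symm
  have hsh : ∀ f ∈ [s(y',u), s(u,v), s(v,x')], f ∉ [s(x,y), s(y,m), s(m,n), s(n,x)] := by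
    intro f hf hmem
    have hfe := huniq f hf hmem
    subst hfe
    simp only [List.mem_cons, List.not_mem_nil, or_false, Sym2.eq, Sym2.rel_iff'] at hf
    simp [hxy', t1, hxu', t7, hxv', t8, hyu', t9, hyv', t10, huv', t11] at hf
  rw [Sym2.eq_iff] at he
  rcases he with ⟨rfl, rfl⟩ | ⟨rfl, rfl⟩
  · exact key' h6 axy aym amn anx ayu' auv' avx' hxm hxn hym hyn hmn
      hxu' hxv' hyu' hyv' huv' ixm iyn hsh
  · refine key' h6 axy aym amn anx avx'.symm auv'.symm ayu'.symm hxm hxn hym hyn hmn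
      hyv' hyu' hxv' hxu' huv'.symm ixm iyn ?_
    intro f hf
    apply hsh f
    simp only [List.mem_cons, List.not_mem_nil, or_false] at hf ⊢
    rcases hf with h | h | h <;> simp [h, Sym2.eq_swap]


private lemma memT1 {α} {A B C D f : α} (h : f ∈ [B, C, D]) : f ∈ [A, B, C, D] := by
  simp only [List.mem_cons, List.not_mem_nil, or_false] at h ⊢; tauto
private lemma memT2 {α} {A B C D f : α} (h : f ∈ [C, D, A]) : f ∈ [A, B, C, D] := by
  simp only [List.mem_cons, List.not_mem_nil, or_false] at h ⊢; tauto
private lemma memT3 {α} {A B C D f : α} (h : f ∈ [D, A, B]) : f ∈ [A, B, C, D] := by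
  simp only [List.mem_cons, List.not_mem_nil, or_false] at h ⊢; tauto
private lemma memT4 {α} {A B C D f : α} (h : f ∈ [A, B, C]) : f ∈ [A, B, C, D] := by
  simp only [List.mem_cons, List.not_mem_nil, or_false] at h ⊢; tauto
private lemma memR2 {α} {A B C D f : α} (h : f ∈ [B, C, D, A]) : f ∈ [A, B, C, D] := by
  simp only [List.mem_cons, List.not_mem_nil, or_false] at h ⊢; tauto
private lemma memR3 {α} {A B C D f : α} (h : f ∈ [C, D, A, B]) : f ∈ [A, B, C, D] := by
  simp only [List.mem_cons, List.not_mem_nil, or_false] at h ⊢; tauto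
private lemma memR4 {α} {A B C D f : α} (h : f ∈ [D, A, B, C]) : f ∈ [A, B, C, D] := by
  simp only [List.mem_cons, List.not_mem_nil, or_false] at h ⊢; tauto

set_option maxHeartbeats 400000 in
/-- In a graph where no 6-cycle has a chord, no 4-cycle distinct from an induced 4-cycle `γ`
shares exactly one edge with `γ`. -/
theorem stmt10 {V : Type*} [DecidableEq V] (G : SimpleGraph V)
    (h6 : ∀ (a : V) (c : G.Walk a a), c.IsCycle → c.length = 6 →
      ∀ x y : V, x ∈ c.support → y ∈ c.support → G.Adj x y → s(x, y) ∈ c.edges)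
    (a : V) (γ : G.Walk a a) (hγ : γ.IsCycle) (hγ4 : γ.length = 4)
    (hγind : ∀ x y : V, x ∈ γ.support → y ∈ γ.support → G.Adj x y → s(x, y) ∈ γ.edges)
    (b : V) (c : G.Walk b b) (hc : c.IsCycle) (hc4 : c.length = 4)
    (hne : c.edges.toFinset ≠ γ.edges.toFinset) :
    (c.edges.toFinset ∩ γ.edges.toFinset).card ≠ 1 := by
  intro hcard
  clear hne
  have hγn := hγ.support_nodup
  have hcn := hc.support_nodup
  obtain ⟨p, q, r, h1, h2, h3, h4, rfl⟩ := walk4 γ hγ4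
  obtain ⟨d1, d2, d3, k1, k2, k3, k4, rfl⟩ := walk4 c hc4
  simp only [Walk.support_cons, Walk.support_nil, List.tail_cons, List.nodup_cons,
    List.mem_cons, List.not_mem_nil, or_false, List.nodup_nil, and_true, not_or,
    not_false_iff] at hγn hcn
  obtain ⟨⟨hpq, hpr, hpa⟩, ⟨hqr, hqa⟩, hra⟩ := hγn
  obtain ⟨⟨h12, h13, h1b⟩, ⟨h23, h2b⟩, h3b⟩ := hcn
  replace hpq : p ≠ q := hpq
  replace hpr : p ≠ r := hpr
  replace hpa : p ≠ a := hpa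
  replace hqr : q ≠ r := hqr
  replace hqa : q ≠ a := hqa
  replace hra : r ≠ a := hra
  replace h12 : d1 ≠ d2 := h12
  replace h13 : d1 ≠ d3 := h13
  replace h1b : d1 ≠ b := h1b
  replace h23 : d2 ≠ d3 := h23
  replace h2b : d2 ≠ b := h2b
  replace h3b : d3 ≠ b := h3b
  -- induced: the diagonals of γ are non-adjacent
  have iaq : ¬ G.Adj a q := by
    intro h
    have := hγind a q (by simp) (by simp) h
    simp only [Walk.edges_cons, Walk.edges_nil, List.mem_cons, List.not_mem_nil, or_false,
      Sym2.eq, Sym2.rel_iff'] at this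
    simp [hpq, hpq.symm, hpr, hpr.symm, hpa, hpa.symm, hqr, hqr.symm, hqa, hqa.symm,
      hra, hra.symm, h.ne, h.ne'] at this
  have ipr : ¬ G.Adj p r := by
    intro h
    have := hγind p r (by simp) (by simp) h
    simp only [Walk.edges_cons, Walk.edges_nil, List.mem_cons, List.not_mem_nil, or_false,
      Sym2.eq, Sym2.rel_iff'] at this
    simp [hpq, hpq.symm, hpr, hpr.symm, hpa, hpa.symm, hqr, hqr.symm, hqa, hqa.symm,
      hra, hra.symm, h.ne, h.ne'] at this
  have iqa : ¬ G.Adj q a := fun h => iaq h.symm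
  have irp : ¬ G.Adj r p := fun h => ipr h.symm
  rw [Finset.card_eq_one] at hcard
  obtain ⟨e0, he0⟩ := hcard
  have he0mem : e0 ∈ _ := he0 ▸ Finset.mem_singleton_self e0
  have he0c := (Finset.mem_inter.1 he0mem).1
  have he0γ := (Finset.mem_inter.1 he0mem).2
  rw [List.mem_toFinset] at he0c he0γ
  have huniq : ∀ f, f ∈ [s(b,d1), s(d1,d2), s(d2,d3), s(d3,b)] →
      f ∈ [s(a,p), s(p,q), s(q,r), s(r,a)] → f = e0 := by
    intro f hf hg
    have : f ∈ ({e0} : Finset (Sym2 V)) := by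
      rw [← he0]
      exact Finset.mem_inter.2 ⟨List.mem_toFinset.2 (by simpa using hf),
        List.mem_toFinset.2 (by simpa using hg)⟩
    exact Finset.mem_singleton.1 this
  simp only [Walk.edges_cons, Walk.edges_nil, List.mem_cons, List.not_mem_nil, or_false]
    at he0c he0γ
  rcases he0γ with hg | hg | hg | hg <;> rcases he0c with hcc | hcc | hcc | hcc
  -- γ rotation 1 : (a, p, q, r)
  · exact key3 h6 h1 h2 h3 h4 hqa.symm hra.symm hpq hpr hqr iaq ipr
      k1 k2 k3 k4 h2b.symm h3b.symm h12 h13 h23 (hg.symm.trans hcc)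
      (fun f hf hg' => (huniq f (memT1 hf) (id hg')).trans hcc)
  · exact key3 h6 h1 h2 h3 h4 hqa.symm hra.symm hpq hpr hqr iaq ipr
      k2 k3 k4 k1 h13 h1b h23 h2b h3b (hg.symm.trans hcc)
      (fun f hf hg' => (huniq f (memT2 hf) (id hg')).trans hcc)
  · exact key3 h6 h1 h2 h3 h4 hqa.symm hra.symm hpq hpr hqr iaq ipr
      k3 k4 k1 k2 h2b h12.symm h3b h13.symm h1b.symm (hg.symm.trans hcc)
      (fun f hf hg' => (huniq f (memT3 hf) (id hg')).trans hcc)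
  · exact key3 h6 h1 h2 h3 h4 hqa.symm hra.symm hpq hpr hqr iaq ipr
      k4 k1 k2 k3 h13.symm h23.symm h1b.symm h2b.symm h12 (hg.symm.trans hcc)
      (fun f hf hg' => (huniq f (memT4 hf) (id hg')).trans hcc)
  -- γ rotation 2 : (p, q, r, a)
  · exact key3 h6 h2 h3 h4 h1 hpr hpa hqr hqa hra ipr iqa
      k1 k2 k3 k4 h2b.symm h3b.symm h12 h13 h23 (hg.symm.trans hcc)
      (fun f hf hg' => (huniq f (memT1 hf) (memR2 hg')).trans hcc)
  · exact key3 h6 h2 h3 h4 h1 hpr hpa hqr hqa hra ipr iqa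
      k2 k3 k4 k1 h13 h1b h23 h2b h3b (hg.symm.trans hcc)
      (fun f hf hg' => (huniq f (memT2 hf) (memR2 hg')).trans hcc)
  · exact key3 h6 h2 h3 h4 h1 hpr hpa hqr hqa hra ipr iqa
      k3 k4 k1 k2 h2b h12.symm h3b h13.symm h1b.symm (hg.symm.trans hcc)
      (fun f hf hg' => (huniq f (memT3 hf) (memR2 hg')).trans hcc)
  · exact key3 h6 h2 h3 h4 h1 hpr hpa hqr hqa hra ipr iqa
      k4 k1 k2 k3 h13.symm h23.symm h1b.symm h2b.symm h12 (hg.symm.trans hcc)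
      (fun f hf hg' => (huniq f (memT4 hf) (memR2 hg')).trans hcc)
  -- γ rotation 3 : (q, r, a, p)
  · exact key3 h6 h3 h4 h1 h2 hqa hpq.symm hra hpr.symm hpa.symm iqa irp
      k1 k2 k3 k4 h2b.symm h3b.symm h12 h13 h23 (hg.symm.trans hcc)
      (fun f hf hg' => (huniq f (memT1 hf) (memR3 hg')).trans hcc)
  · exact key3 h6 h3 h4 h1 h2 hqa hpq.symm hra hpr.symm hpa.symm iqa irp
      k2 k3 k4 k1 h13 h1b h23 h2b h3b (hg.symm.trans hcc)
      (fun f hf hg' => (huniq f (memT2 hf) (memR3 hg')).trans hcc)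
  · exact key3 h6 h3 h4 h1 h2 hqa hpq.symm hra hpr.symm hpa.symm iqa irp
      k3 k4 k1 k2 h2b h12.symm h3b h13.symm h1b.symm (hg.symm.trans hcc)
      (fun f hf hg' => (huniq f (memT3 hf) (memR3 hg')).trans hcc)
  · exact key3 h6 h3 h4 h1 h2 hqa hpq.symm hra hpr.symm hpa.symm iqa irp
      k4 k1 k2 k3 h13.symm h23.symm h1b.symm h2b.symm h12 (hg.symm.trans hcc)
      (fun f hf hg' => (huniq f (memT4 hf) (memR3 hg')).trans hcc)
  -- γ rotation 4 : (r, a, p, q)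
  · exact key3 h6 h4 h1 h2 h3 hpr.symm hqr.symm hpa.symm hqa.symm hpq irp iaq
      k1 k2 k3 k4 h2b.symm h3b.symm h12 h13 h23 (hg.symm.trans hcc)
      (fun f hf hg' => (huniq f (memT1 hf) (memR4 hg')).trans hcc)
  · exact key3 h6 h4 h1 h2 h3 hpr.symm hqr.symm hpa.symm hqa.symm hpq irp iaq
      k2 k3 k4 k1 h13 h1b h23 h2b h3b (hg.symm.trans hcc)
      (fun f hf hg' => (huniq f (memT2 hf) (memR4 hg')).trans hcc)
  · exact key3 h6 h4 h1 h2 h3 hpr.symm hqr.symm hpa.symm hqa.symm hpq irp iaq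
      k3 k4 k1 k2 h2b h12.symm h3b h13.symm h1b.symm (hg.symm.trans hcc)
      (fun f hf hg' => (huniq f (memT3 hf) (memR4 hg')).trans hcc)
  · exact key3 h6 h4 h1 h2 h3 hpr.symm hqr.symm hpa.symm hqa.symm hpq irp iaq
      k4 k1 k2 k3 h13.symm h23.symm h1b.symm h2b.symm h12 (hg.symm.trans hcc)
      (fun f hf hg' => (huniq f (memT4 hf) (memR4 hg')).trans hcc)
end

section
/- Let G be a 2-connected cubic simple graph on n vertices and let B ⊆ V(G) be the union of the vertex sets of all isolated chorded 4-cycles of G. Then |B| ≤ (6/7)·n. -/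
open SimpleGraph

/-- `S` is (the vertex set of) a chorded 4-cycle of `G`: four distinct vertices inducing
a 4-cycle `a u₀ b u₁` together with exactly one chord `u₀u₁`. -/
def IsChordedFourCycle {V : Type*} (G : SimpleGraph V) (S : Set V) : Prop :=
  ∃ a b u₀ u₁ : V, S = {a, b, u₀, u₁} ∧
    a ≠ b ∧ a ≠ u₀ ∧ a ≠ u₁ ∧ b ≠ u₀ ∧ b ≠ u₁ ∧ u₀ ≠ u₁ ∧
    G.Adj a u₀ ∧ G.Adj a u₁ ∧ G.Adj b u₀ ∧ G.Adj b u₁ ∧ G.Adj u₀ u₁ ∧ ¬ G.Adj a b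

/-- A chorded 4-cycle is isolated if no edge of `G` leaving it has its other endpoint in
a chorded 4-cycle. -/
def IsIsolatedChordedFourCycle {V : Type*} (G : SimpleGraph V) (S : Set V) : Prop :=
  IsChordedFourCycle G S ∧
  ∀ x y : V, x ∈ S → y ∉ S → G.Adj x y →
    ∀ T : Set V, IsChordedFourCycle G T → y ∉ T

/-- If an isolated chorded 4-cycle `S` meets a chorded 4-cycle `T`, then `T ⊆ S`. -/
lemma absorb_of_isolated {V : Type*} {G : SimpleGraph V} {S T : Set V}
    (hS : IsIsolatedChordedFourCycle G S) (hT : IsChordedFourCycle G T)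
    {v : V} (hvS : v ∈ S) (hvT : v ∈ T) : T ⊆ S := by
  obtain ⟨a, b, u₀, u₁, rfl, hab, hau0, hau1, hbu0, hbu1, hu, h1, h2, h3, h4, h5, h6⟩ := hT
  have hTc : IsChordedFourCycle G ({a, b, u₀, u₁} : Set V) :=
    ⟨a, b, u₀, u₁, rfl, hab, hau0, hau1, hbu0, hbu1, hu, h1, h2, h3, h4, h5, h6⟩
  have step : ∀ x y : V, y ∈ ({a, b, u₀, u₁} : Set V) → x ∈ S → G.Adj x y → y ∈ S := by
    intro x y hy hxs hadj
    by_contra hys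
    exact hS.2 x y hxs hys hadj _ hTc hy
  have ma : a ∈ ({a, b, u₀, u₁} : Set V) := by simp
  have mb : b ∈ ({a, b, u₀, u₁} : Set V) := by simp
  have mu0 : u₀ ∈ ({a, b, u₀, u₁} : Set V) := by simp
  have mu1 : u₁ ∈ ({a, b, u₀, u₁} : Set V) := by simp
  have all4 : a ∈ S ∧ b ∈ S ∧ u₀ ∈ S ∧ u₁ ∈ S := by
    have hv : v = a ∨ v = b ∨ v = u₀ ∨ v = u₁ := by
      simpa [Set.mem_insert_iff] using hvT
    rcases hv with rfl | rfl | rfl | rfl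
    · have h0 : u₀ ∈ S := step v u₀ mu0 hvS h1
      have h1' : u₁ ∈ S := step v u₁ mu1 hvS h2
      exact ⟨hvS, step u₀ b mb h0 h3.symm, h0, h1'⟩
    · have h0 : u₀ ∈ S := step v u₀ mu0 hvS h3
      have h1' : u₁ ∈ S := step v u₁ mu1 hvS h4
      exact ⟨step u₀ a ma h0 h1.symm, hvS, h0, h1'⟩
    · exact ⟨step v a ma hvS h1.symm, step v b mb hvS h3.symm, hvS, step v u₁ mu1 hvS h5⟩
    · exact ⟨step v a ma hvS h2.symm, step v b mb hvS h4.symm, step v u₀ mu0 hvS h5.symm, hvS⟩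
  intro x hx
  rcases (by simpa [Set.mem_insert_iff] using hx : x = a ∨ x = b ∨ x = u₀ ∨ x = u₁) with
    rfl | rfl | rfl | rfl
  · exact all4.1
  · exact all4.2.1
  · exact all4.2.2.1
  · exact all4.2.2.2

/-- In a 2-connected cubic graph on `n` vertices, the union `B` of the vertex sets of all
isolated chorded 4-cycles satisfies `|B| ≤ (6/7)·n`. -/
theorem stmt11 {V : Type*} [Fintype V] [DecidableEq V]
    (G : SimpleGraph V) [DecidableRel G.Adj]
    (hcubic : ∀ v : V, G.degree v = 3)
    (hcard3 : 3 ≤ Fintype.card V)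
    (hconn : G.Connected)
    (hdel : ∀ v : V, (G.induce ({v}ᶜ : Set V)).Connected) :
    (({v : V | ∃ S : Set V, IsIsolatedChordedFourCycle G S ∧ v ∈ S}).ncard : ℝ)
      ≤ 6 / 7 * (Fintype.card V : ℝ) := by
  classical
  set B : Set V := {v : V | ∃ S : Set V, IsIsolatedChordedFourCycle G S ∧ v ∈ S} with hBdef
  set C : Set V := {x | x ∈ B ∧ ∃ y, y ∉ B ∧ G.Adj x y} with hCdef
  have hIfin : ({S : Set V | IsIsolatedChordedFourCycle G S}).Finite := Set.toFinite _
  set I : Finset (Set V) := hIfin.toFinset with hIdef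
  have hmemI : ∀ S : Set V, S ∈ I ↔ IsIsolatedChordedFourCycle G S := by
    intro S; rw [hIdef, Set.Finite.mem_toFinset]; rfl
  set F : Set V → Finset V := fun S => (Set.toFinite S).toFinset with hFdef
  have hmemF : ∀ (S : Set V) (x : V), x ∈ F S ↔ x ∈ S := by
    intro S x; rw [hFdef]; exact Set.Finite.mem_toFinset _
  -- the three neighbors of a vertex
  have nbr3 : ∀ p q r s : V, G.Adj p q → G.Adj p r → G.Adj p s → q ≠ r → q ≠ s → r ≠ s →
      ∀ y, G.Adj p y → y = q ∨ y = r ∨ y = s := by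
    intro p q r s hq hr hs hqr hqs hrs y hy
    have hsub : ({q, r, s} : Finset V) ⊆ G.neighborFinset p := by
      intro z hz
      rcases Finset.mem_insert.mp hz with rfl | hz
      · exact (G.mem_neighborFinset p z).mpr hq
      rcases Finset.mem_insert.mp hz with rfl | hz
      · exact (G.mem_neighborFinset p z).mpr hr
      · rw [Finset.mem_singleton] at hz; subst hz
        exact (G.mem_neighborFinset p z).mpr hs
    have hcard : ({q, r, s} : Finset V).card = 3 :=
      Finset.card_eq_three.mpr ⟨q, r, s, hqr, hqs, hrs, rfl⟩
    have hNcard : (G.neighborFinset p).card = 3 := by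
      rw [← hcubic p]; exact G.card_neighborFinset_eq_degree p
    have heq : ({q, r, s} : Finset V) = G.neighborFinset p :=
      Finset.eq_of_subset_of_card_le hsub (by rw [hNcard, hcard])
    have : y ∈ ({q, r, s} : Finset V) := by
      rw [heq]; exact (G.mem_neighborFinset p y).mpr hy
    simpa using this
  -- existence of a third neighbor
  have third : ∀ p q r : V, G.Adj p q → G.Adj p r → q ≠ r →
      ∃ y, G.Adj p y ∧ y ≠ q ∧ y ≠ r := by
    intro p q r hq hr hqr
    have hNcard : (G.neighborFinset p).card = 3 := by
      rw [← hcubic p]; exact G.card_neighborFinset_eq_degree p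
    have hns : ¬ G.neighborFinset p ⊆ ({q, r} : Finset V) := by
      intro hsub
      have := Finset.card_le_card hsub
      have h2 : ({q, r} : Finset V).card ≤ 2 := Finset.card_insert_le _ _ |>.trans (by simp)
      omega
    obtain ⟨y, hyN, hy⟩ := Finset.not_subset.mp hns
    refine ⟨y, (G.mem_neighborFinset p y).mp hyN, ?_, ?_⟩
    · intro h; exact hy (by simp [h])
    · intro h; exact hy (by simp [h])
  have hSsubB : ∀ S : Set V, IsIsolatedChordedFourCycle G S → ∀ x ∈ S, x ∈ B := by
    intro S hS x hx; exact ⟨S, hS, hx⟩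
  -- per-S facts: |S| = 4 and |C ∩ S| = 2
  have perS : ∀ S ∈ I, (F S).card = 4 ∧ ((F S).filter (· ∈ C)).card = 2 := by
    intro S hSI
    have hS := (hmemI S).mp hSI
    obtain ⟨a, b, u₀, u₁, hSeq, hab, hau0, hau1, hbu0, hbu1, hu,
      h1, h2, h3, h4, h5, h6⟩ := hS.1
    have hFS : F S = ({a, b, u₀, u₁} : Finset V) := by
      ext x
      rw [hmemF, hSeq]
      simp [Set.mem_insert_iff]
    have hcard4 : (F S).card = 4 := by
      rw [hFS]
      rw [Finset.card_insert_of_notMem (by simp [hab, hau0, hau1]),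
        Finset.card_insert_of_notMem (by simp [hbu0, hbu1]),
        Finset.card_insert_of_notMem (by simp [hu]), Finset.card_singleton]
    -- corner membership: a ∈ C and b ∈ C
    have notinB : ∀ x y : V, x ∈ S → y ∉ S → G.Adj x y → y ∉ B := by
      intro x y hx hy hadj hyB
      obtain ⟨T, hT, hyT⟩ := hyB
      exact hS.2 x y hx hy hadj T hT.1 hyT
    have cornerC : ∀ x w₀ w₁ : V, x ∈ S → G.Adj x w₀ → G.Adj x w₁ → w₀ ≠ w₁ →
        (∀ y, G.Adj x y → y = w₀ ∨ y = w₁ ∨ y ∈ S) → False → True := fun _ _ _ _ _ _ _ _ _ => trivial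
    have haS : a ∈ S := by rw [hSeq]; simp
    have hbS : b ∈ S := by rw [hSeq]; simp
    have hu0S : u₀ ∈ S := by rw [hSeq]; simp
    have hu1S : u₁ ∈ S := by rw [hSeq]; simp
    have haC : a ∈ C := by
      obtain ⟨y, hy, hy0, hy1⟩ := third a u₀ u₁ h1 h2 hu
      have hyS : y ∉ S := by
        rw [hSeq]
        intro hyS
        rcases (by simpa using hyS : y = a ∨ y = b ∨ y = u₀ ∨ y = u₁) with rfl | rfl | rfl | rfl
        · exact G.irrefl hy
        · exact h6 hy
        · exact hy0 rfl
        · exact hy1 rfl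
      exact ⟨hSsubB S hS a haS, y, notinB a y haS hyS hy, hy⟩
    have hbC : b ∈ C := by
      obtain ⟨y, hy, hy0, hy1⟩ := third b u₀ u₁ h3 h4 hu
      have hyS : y ∉ S := by
        rw [hSeq]
        intro hyS
        rcases (by simpa using hyS : y = a ∨ y = b ∨ y = u₀ ∨ y = u₁) with rfl | rfl | rfl | rfl
        · exact h6 hy.symm
        · exact G.irrefl hy
        · exact hy0 rfl
        · exact hy1 rfl
      exact ⟨hSsubB S hS b hbS, y, notinB b y hbS hyS hy, hy⟩
    have hu0C : u₀ ∉ C := by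
      rintro ⟨-, y, hyB, hy⟩
      rcases nbr3 u₀ a b u₁ h1.symm h3.symm h5 hab hau1 hbu1 y hy with rfl | rfl | rfl
      · exact hyB (hSsubB S hS _ haS)
      · exact hyB (hSsubB S hS _ hbS)
      · exact hyB (hSsubB S hS _ hu1S)
    have hu1C : u₁ ∉ C := by
      rintro ⟨-, y, hyB, hy⟩
      rcases nbr3 u₁ a b u₀ h2.symm h4.symm h5.symm hab hau0 hbu0 y hy with rfl | rfl | rfl
      · exact hyB (hSsubB S hS _ haS)
      · exact hyB (hSsubB S hS _ hbS)
      · exact hyB (hSsubB S hS _ hu0S)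
    have hfilter : (F S).filter (· ∈ C) = ({a, b} : Finset V) := by
      rw [hFS]
      ext x
      simp only [Finset.mem_filter, Finset.mem_insert, Finset.mem_singleton]
      constructor
      · rintro ⟨rfl | rfl | rfl | rfl, hxC⟩
        · exact Or.inl rfl
        · exact Or.inr rfl
        · exact absurd hxC hu0C
        · exact absurd hxC hu1C
      · rintro (rfl | rfl)
        · exact ⟨Or.inl rfl, haC⟩
        · exact ⟨Or.inr (Or.inl rfl), hbC⟩
    refine ⟨hcard4, ?_⟩
    rw [hfilter, Finset.card_insert_of_notMem (by simp [hab]), Finset.card_singleton]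
  -- disjointness
  have hdisj : ∀ S ∈ I, ∀ T ∈ I, S ≠ T → Disjoint (F S) (F T) := by
    intro S hSI T hTI hne
    rw [Finset.disjoint_left]
    intro x hxS hxT
    rw [hmemF] at hxS hxT
    have hS := (hmemI S).mp hSI
    have hT := (hmemI T).mp hTI
    exact hne (le_antisymm (absorb_of_isolated hT hS.1 hxT hxS)
      (absorb_of_isolated hS hT.1 hxS hxT))
  set Bf : Finset V := I.biUnion F with hBfdef
  have hBeq : B = ↑Bf := by
    ext v
    simp only [hBfdef, Finset.coe_biUnion, Set.mem_iUnion, Finset.mem_coe]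
    constructor
    · rintro ⟨S, hS, hvS⟩
      exact ⟨S, (hmemI S).mpr hS, (hmemF S v).mpr hvS⟩
    · rintro ⟨S, hSI, hvS⟩
      exact ⟨S, (hmemI S).mp hSI, (hmemF S v).mp hvS⟩
  set k : ℕ := I.card with hkdef
  have hBcard : Bf.card = 4 * k := by
    rw [hBfdef, Finset.card_biUnion hdisj]
    rw [Finset.sum_congr rfl (fun S hS => (perS S hS).1), Finset.sum_const, smul_eq_mul,
      mul_comm]
  -- C as a finset
  set Cf : Finset V := I.biUnion (fun S => (F S).filter (· ∈ C)) with hCfdef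
  have hCeq : ∀ x, x ∈ Cf ↔ x ∈ C := by
    intro x
    simp only [hCfdef, Finset.mem_biUnion, Finset.mem_filter]
    constructor
    · rintro ⟨S, hSI, hxS, hxC⟩; exact hxC
    · intro hxC
      obtain ⟨⟨S, hS, hxS⟩, -⟩ := id hxC
      exact ⟨S, (hmemI S).mpr hS, (hmemF S x).mpr hxS, hxC⟩
  have hCcard : Cf.card = 2 * k := by
    rw [hCfdef, Finset.card_biUnion (fun S hS T hT hne =>
      Finset.disjoint_filter_filter (hdisj S hS T hT hne))]
    rw [Finset.sum_congr rfl (fun S hS => (perS S hS).2), Finset.sum_const, smul_eq_mul,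
      mul_comm]
  -- choose external neighbors
  have hch : ∀ x : V, ∃ y : V, x ∈ C → y ∉ B ∧ G.Adj x y := by
    intro x
    by_cases hx : x ∈ C
    · obtain ⟨-, y, hy⟩ := hx
      exact ⟨y, fun _ => hy⟩
    · exact ⟨x, fun h => absurd h hx⟩
  choose f hf using hch
  have hfib : Cf.card ≤ 3 * (Cf.image f).card := by
    rw [Finset.card_eq_sum_card_fiberwise (fun x hx => Finset.mem_image_of_mem f hx)]
    calc ∑ y ∈ Cf.image f, (Cf.filter fun x => f x = y).card
        ≤ ∑ _y ∈ Cf.image f, 3 := by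
          refine Finset.sum_le_sum fun y hy => ?_
          have hsub : (Cf.filter fun x => f x = y) ⊆ G.neighborFinset y := by
            intro x hx
            obtain ⟨hxCf, hxy⟩ := Finset.mem_filter.mp hx
            have hxC := (hCeq x).mp hxCf
            have := (hf x hxC).2
            rw [hxy] at this
            exact (G.mem_neighborFinset y x).mpr this.symm
          have := Finset.card_le_card hsub
          have hN : (G.neighborFinset y).card = 3 := by
            rw [← hcubic y]; exact G.card_neighborFinset_eq_degree y
          omega
      _ = 3 * (Cf.image f).card := by rw [Finset.sum_const, smul_eq_mul, mul_comm]
  have himg : (Cf.image f) ⊆ Finset.univ \ Bf := by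
    intro y hy
    obtain ⟨x, hxCf, rfl⟩ := Finset.mem_image.mp hy
    have hxC := (hCeq x).mp hxCf
    have hfx := (hf x hxC).1
    rw [hBeq] at hfx
    simp only [Finset.mem_sdiff, Finset.mem_univ, true_and]
    exact fun h => hfx h
  have hBle : Bf.card ≤ Fintype.card V := by
    simpa using Finset.card_le_card (Finset.subset_univ Bf)
  have hmain : 14 * k ≤ 3 * Fintype.card V := by
    have h1 : (Cf.image f).card ≤ Fintype.card V - Bf.card := by
      have := Finset.card_le_card himg
      rwa [Finset.card_sdiff_of_subset (Finset.subset_univ _), Finset.card_univ] at this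
    rw [hCcard] at hfib
    rw [hBcard] at hBle h1
    omega
  -- final arithmetic
  have hBncard : B.ncard = 4 * k := by rw [hBeq, Set.ncard_coe_finset, hBcard]
  rw [hBncard]
  have h14 : (14 * k : ℝ) ≤ 3 * (Fintype.card V : ℝ) := by exact_mod_cast hmain
  push_cast
  linarith
end

section
/- Let G be a cubic simple graph, M a perfect matching of G, and C an induced cycle of G none of whose edges belongs to M. Then every path in G joining two distinct vertices of C and sharing no edge with C has length at least 3. -/
open SimpleGraph

lemma aux_two_nbrs {V : Type*} {G : SimpleGraph V} {x : V} (q : G.Walk x x)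
    (hq : q.IsCycle) :
    ∃ n1 n2 : V, n1 ≠ n2 ∧ s(x, n1) ∈ q.edges ∧ s(x, n2) ∈ q.edges := by
  cases q with
  | nil => exact absurd hq Walk.IsCycle.not_of_nil
  | @cons _ b _ h q' =>
    rw [Walk.cons_isCycle_iff] at hq
    obtain ⟨hq', hne⟩ := hq
    have hd : q'.darts ≠ [] := by
      intro hnil
      have hlen : q'.length = 0 := by
        have := q'.length_darts
        rw [hnil] at this
        simpa using this.symm
      exact h.ne' (Walk.eq_of_length_eq_zero hlen)
    set d := q'.darts.getLast hd with hddef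
    have hdmem : d ∈ q'.darts := List.getLast_mem hd
    have hsnd : d.snd = x := by rw [hddef, Walk.getLast_darts_eq_lastDart]; rfl
    have hedge : d.edge ∈ q'.edges := List.mem_map_of_mem (f := SimpleGraph.Dart.edge) hdmem
    have hdedge : d.edge = s(d.fst, x) := by rw [← hsnd]; rfl
    refine ⟨b, d.fst, ?_, ?_, ?_⟩
    · intro hbd
      apply hne
      rw [← hbd] at hdedge
      rw [Sym2.eq_swap, ← hdedge]
      exact hedge
    · simp
    · rw [Walk.edges_cons]
      apply List.mem_cons_of_mem
      rw [Sym2.eq_swap, ← hdedge]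
      exact hedge

/-- Let `G` be cubic, `M` a perfect matching, and `C` an induced cycle none of whose edges
belongs to `M`. Then every path joining two distinct vertices of `C` and sharing no edge
with `C` has length at least 3. -/
theorem stmt12 {V : Type*} [Fintype V] [DecidableEq V]
    (G : SimpleGraph V) [DecidableRel G.Adj]
    (hcubic : ∀ v : V, G.degree v = 3)
    (M : G.Subgraph) (hM : M.IsPerfectMatching)
    (a : V) (c : G.Walk a a) (hc : c.IsCycle)
    (hcind : ∀ x y : V, x ∈ c.support → y ∈ c.support → G.Adj x y → s(x, y) ∈ c.edges)
    (hcM : ∀ e ∈ c.edges, e ∉ M.edgeSet)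
    (u v : V) (hu : u ∈ c.support) (hv : v ∈ c.support) (huv : u ≠ v)
    (p : G.Walk u v) (hp : p.IsPath)
    (hpc : ∀ e ∈ p.edges, e ∉ c.edges) :
    3 ≤ p.length := by
  -- Key: any edge at a cycle vertex that is not a cycle edge must be a matching edge.
  have key : ∀ x y : V, x ∈ c.support → G.Adj x y → s(x, y) ∉ c.edges → M.Adj x y := by
    intro x y hx hxy hne
    obtain ⟨mx, hmx, -⟩ := hM.1 (hM.2 x)
    obtain ⟨n1, n2, h12, he1, he2⟩ := aux_two_nbrs (c.rotate x hx) (hc.rotate hx)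
    have he1' : s(x, n1) ∈ c.edges := (c.rotate_edges x hx).mem_iff.mp he1
    have he2' : s(x, n2) ∈ c.edges := (c.rotate_edges x hx).mem_iff.mp he2
    have ha1 : G.Adj x n1 := c.adj_of_mem_edges he1'
    have ha2 : G.Adj x n2 := c.adj_of_mem_edges he2'
    have hmxadj : G.Adj x mx := M.adj_sub hmx
    have hmx1 : mx ≠ n1 := by
      rintro rfl; exact hcM _ he1' (Subgraph.mem_edgeSet.mpr hmx)
    have hmx2 : mx ≠ n2 := by
      rintro rfl; exact hcM _ he2' (Subgraph.mem_edgeSet.mpr hmx)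
    have hy1 : y ≠ n1 := by rintro rfl; exact hne he1'
    have hy2 : y ≠ n2 := by rintro rfl; exact hne he2'
    have hsub : ({n1, n2} : Finset V) ⊆ G.neighborFinset x := by
      intro z hz
      rw [SimpleGraph.mem_neighborFinset]
      rcases Finset.mem_insert.mp hz with rfl | hz
      · exact ha1
      · rw [Finset.mem_singleton] at hz; subst hz; exact ha2
    have hcard : (G.neighborFinset x \ {n1, n2}).card = 1 := by
      rw [Finset.card_sdiff_of_subset hsub, Finset.card_insert_of_notMem (by simpa using h12),
        Finset.card_singleton]
      have : (G.neighborFinset x).card = 3 := hcubic x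
      omega
    obtain ⟨z, hz⟩ := Finset.card_eq_one.mp hcard
    have hyz : y ∈ G.neighborFinset x \ {n1, n2} := by
      simp [SimpleGraph.mem_neighborFinset, hxy, hy1, hy2]
    have hmz : mx ∈ G.neighborFinset x \ {n1, n2} := by
      simp [SimpleGraph.mem_neighborFinset, hmxadj, hmx1, hmx2]
    rw [hz, Finset.mem_singleton] at hyz hmz
    rw [hyz, ← hmz]
    exact hmx
  cases p with
  | nil => exact absurd rfl huv
  | @cons _ w _ h₁ q =>
    cases q with
    | nil =>
      exact absurd (hcind u v hu hv h₁) (hpc _ (by simp))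
    | @cons _ w' _ h₂ r =>
      cases r with
      | nil =>
        exfalso
        have e1 : s(u, w) ∉ c.edges := hpc _ (by simp)
        have e2 : s(v, w) ∉ c.edges := by
          rw [Sym2.eq_swap]; exact hpc _ (by simp)
        have m1 : M.Adj u w := key u w hu h₁ e1
        have m2 : M.Adj v w := key v w hv h₂.symm e2
        obtain ⟨w'', hw'', huniq⟩ := hM.1 (hM.2 w)
        exact huv ((huniq u m1.symm).trans (huniq v m2.symm).symm)
      | cons h₃ r' =>
        simp only [Walk.length_cons]
        omega
end
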